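/- arXiv:2111.10238 — 4 statements merged into one kernel-verified Lean document; each statement's English description precedes it below -/
import Mathlib

section
/- Second-order necessary condition: Suppose x̄ is a local minimizer of Φ := F + G satisfying the quadratic growth condition Φ(x) ≥ Φ(x̄) + (c/2)‖x − x̄‖²_X for all x ∈ B_ε(x̄), for some c ≥ 0 and ε > 0. Assume further that either (i) the map h ↦ F''(x̄)(h,h) is sequentially weak-* upper semicontinuous on X, or (ii) G is strongly twice epi-differentiable at x̄ for −F'(x̄). Then F''(x̄)(h,h) + G''(x̄, −F'(x̄); h) ≥ c‖h‖²_X for all h ∈ X. -/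
open Filter Topology

/-- The weak-* second subderivative `G''(x, w; h)` of `G : X → (−∞,∞]` on the dual
`X = Y*`, at `x` for `w ∈ Y`, in direction `h`:
`inf { liminf_k [G(x + t_k h_k) − G(x) − t_k ⟨w, h_k⟩]/(t_k²/2) : t_k ↓ 0, h_k ⇀* h }`. -/
noncomputable def weakStarSecondSubderiv {Y : Type*} [NormedAddCommGroup Y] [NormedSpace ℝ Y]
    (G : (Y →L[ℝ] ℝ) → EReal) (x : Y →L[ℝ] ℝ) (w : Y) (h : Y →L[ℝ] ℝ) : EReal :=
  sInf { L : EReal | ∃ (t : ℕ → ℝ) (hs : ℕ → (Y →L[ℝ] ℝ)),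
    (∀ k, 0 < t k) ∧ Tendsto t atTop (𝓝 0) ∧
    (∀ z : Y, Tendsto (fun k => hs k z) atTop (𝓝 (h z))) ∧
    L = liminf (fun k => (((2 / (t k) ^ 2 : ℝ)) : EReal) *
          (G (x + t k • hs k) - G x - (((t k * hs k w : ℝ)) : EReal))) atTop }

/-- `G` is strongly twice epi-differentiable at `x` for `w`: for every direction `h` and
every `t_k ↓ 0` there is a strongly convergent recovery sequence `h_k → h` realizing
`G''(x, w; h)` as a limit of second-order difference quotients. -/
def StronglyTwiceEpiDiff {Y : Type*} [NormedAddCommGroup Y] [NormedSpace ℝ Y]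
    (G : (Y →L[ℝ] ℝ) → EReal) (x : Y →L[ℝ] ℝ) (w : Y) : Prop :=
  ∀ h : Y →L[ℝ] ℝ, ∀ t : ℕ → ℝ, (∀ k, 0 < t k) → Tendsto t atTop (𝓝 0) →
    ∃ hs : ℕ → (Y →L[ℝ] ℝ), Tendsto hs atTop (𝓝 h) ∧
      Tendsto (fun k => (((2 / (t k) ^ 2 : ℝ)) : EReal) *
          (G (x + t k • hs k) - G x - (((t k * hs k w : ℝ)) : EReal))) atTop
        (𝓝 (weakStarSecondSubderiv G x w h))

/-- Eventual lower bound on `c‖h_k‖²` from pointwise (weak-*) convergence of `h_k` to `h`. -/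
lemma aux_norm_sq_event {Y : Type*} [NormedAddCommGroup Y] [NormedSpace ℝ Y]
    (h : Y →L[ℝ] ℝ) (hs : ℕ → (Y →L[ℝ] ℝ))
    (hpw : ∀ z : Y, Tendsto (fun k => hs k z) atTop (𝓝 (h z)))
    (c : ℝ) (hc : 0 ≤ c) {δ : ℝ} (hδ : 0 < δ) :
    ∀ᶠ k in atTop, c * ‖h‖ ^ 2 - δ ≤ c * ‖hs k‖ ^ 2 := by
  rcases eq_or_lt_of_le hc with hc0 | hcpos
  · filter_upwards with k
    have := sq_nonneg ‖hs k‖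
    nlinarith
  · by_cases htr : ‖h‖ ^ 2 - δ / c ≤ 0
    · filter_upwards with k
      have h1 : 0 ≤ ‖hs k‖ ^ 2 := sq_nonneg _
      have h2 : c * (‖h‖ ^ 2 - δ / c) ≤ 0 := mul_nonpos_of_nonneg_of_nonpos (le_of_lt hcpos) htr
      have h3 : c * (‖h‖ ^ 2 - δ / c) = c * ‖h‖ ^ 2 - δ := by
        field_simp
      nlinarith
    · push_neg at htr
      set rr := Real.sqrt (‖h‖ ^ 2 - δ / c) with hrr_def
      have hrr_nonneg : 0 ≤ rr := Real.sqrt_nonneg _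
      have hrr_sq : rr ^ 2 = ‖h‖ ^ 2 - δ / c := Real.sq_sqrt (le_of_lt htr)
      have hrr_lt : rr < ‖h‖ := by
        have hδc : 0 < δ / c := div_pos hδ hcpos
        have : rr ^ 2 < ‖h‖ ^ 2 := by rw [hrr_sq]; linarith
        nlinarith [norm_nonneg h]
      obtain ⟨z, hz1, hz2⟩ := h.exists_lt_apply_of_lt_opNorm hrr_lt
      have hzc : Tendsto (fun k => ‖hs k z‖) atTop (𝓝 ‖h z‖) := (hpw z).norm
      have hev : ∀ᶠ k in atTop, rr < ‖hs k z‖ :=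
        hzc.eventually_const_lt hz2
      filter_upwards [hev] with k hk
      have hb : ‖hs k z‖ ≤ ‖hs k‖ := by
        calc ‖hs k z‖ ≤ ‖hs k‖ * ‖z‖ := (hs k).le_opNorm z
          _ ≤ ‖hs k‖ * 1 := by
              exact mul_le_mul_of_nonneg_left (le_of_lt hz1) (norm_nonneg _)
          _ = ‖hs k‖ := mul_one _
      have hlt : rr < ‖hs k‖ := lt_of_lt_of_le hk hb
      have hsq : rr ^ 2 < ‖hs k‖ ^ 2 := by nlinarith
      rw [hrr_sq] at hsq
      have hmul : c * (‖h‖ ^ 2 - δ / c) < c * ‖hs k‖ ^ 2 :=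
        mul_lt_mul_of_pos_left hsq hcpos
      have h3 : c * (‖h‖ ^ 2 - δ / c) = c * ‖h‖ ^ 2 - δ := by
        field_simp
      linarith

set_option maxHeartbeats 1000000 in
/-- Core quantitative lemma: if along a sequence `t_k ↓ 0`, `h_k ⇀* h` the second-order
difference quotients of `G` are bounded above by `b` and `limsup F''(h_k,h_k) ≤ F''(h,h)`,
then `c‖h‖² − F''(h,h) ≤ b`. -/
lemma aux_core_bound
    {Y : Type*} [NormedAddCommGroup Y] [NormedSpace ℝ Y] [CompleteSpace Y]
    (G : (Y →L[ℝ] ℝ) → EReal) (hGbot : ∀ x, G x ≠ ⊥)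
    (F : (Y →L[ℝ] ℝ) → ℝ)
    (xbar : Y →L[ℝ] ℝ) (hxbar : G xbar ≠ ⊤)
    (F' : Y) (F'' : (Y →L[ℝ] ℝ) →L[ℝ] (Y →L[ℝ] ℝ) →L[ℝ] ℝ)
    (hTaylor : ∀ (t : ℕ → ℝ) (hs : ℕ → (Y →L[ℝ] ℝ)) (h : Y →L[ℝ] ℝ),
      (∀ k, 0 < t k) → Tendsto t atTop (𝓝 0) →
      (∀ z : Y, Tendsto (fun k => hs k z) atTop (𝓝 (h z))) →
      (∀ k, G (xbar + t k • hs k) ≠ ⊤) →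
      Tendsto (fun k => (F (xbar + t k • hs k) - F xbar - t k * hs k F'
          - (1 / 2) * (t k) ^ 2 * F'' (hs k) (hs k)) / (t k) ^ 2) atTop (𝓝 0))
    (c ε : ℝ) (hc : 0 ≤ c) (hε : 0 < ε)
    (hgrowth : ∀ x : Y →L[ℝ] ℝ, ‖x - xbar‖ ≤ ε →
      ((F xbar : ℝ) : EReal) + G xbar + ((c / 2 * ‖x - xbar‖ ^ 2 : ℝ) : EReal)
        ≤ ((F x : ℝ) : EReal) + G x)
    (h : Y →L[ℝ] ℝ) (t : ℕ → ℝ) (hs : ℕ → (Y →L[ℝ] ℝ))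
    (ht0 : ∀ k, 0 < t k) (htt : Tendsto t atTop (𝓝 0))
    (hpw : ∀ z : Y, Tendsto (fun k => hs k z) atTop (𝓝 (h z)))
    (b : ℝ)
    (hQb : ∀ k, (((2 / (t k) ^ 2 : ℝ)) : EReal) *
          (G (xbar + t k • hs k) - G xbar - (((t k * hs k (-F') : ℝ)) : EReal)) ≤ (b : EReal))
    (husc : limsup (fun k => ((F'' (hs k) (hs k) : ℝ) : EReal)) atTop
        ≤ ((F'' h h : ℝ) : EReal)) :
    c * ‖h‖ ^ 2 - F'' h h ≤ b := by
  set gbar := (G xbar).toReal with hgbar_def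
  have hGxbar : G xbar = (gbar : EReal) := (EReal.coe_toReal hxbar (hGbot xbar)).symm
  -- the points along the sequence stay in the domain of G
  have hGtop : ∀ k, G (xbar + t k • hs k) ≠ ⊤ := by
    intro k hk
    have htk := ht0 k
    have hpos : (0:ℝ) < 2 / (t k) ^ 2 := by positivity
    have h1 : (((2 / (t k) ^ 2 : ℝ)) : EReal) *
        (G (xbar + t k • hs k) - G xbar - (((t k * hs k (-F') : ℝ)) : EReal)) = ⊤ := by
      rw [hk, hGxbar, EReal.top_sub_coe, EReal.top_sub_coe]
      exact EReal.coe_mul_top_of_pos hpos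
    have := hQb k
    rw [h1] at this
    exact absurd this (by simp)
  set g : ℕ → ℝ := fun k => (G (xbar + t k • hs k)).toReal with hg_def
  have hGk : ∀ k, G (xbar + t k • hs k) = (g k : EReal) := fun k =>
    (EReal.coe_toReal (hGtop k) (hGbot _)).symm
  set q : ℕ → ℝ := fun k => 2 / (t k) ^ 2 * (g k - gbar + t k * hs k F') with hq_def
  have hqb : ∀ k, q k ≤ b := by
    intro k
    have hQ := hQb k
    rw [hGk k, hGxbar, map_neg] at hQ
    have heq : (((2 / (t k) ^ 2 : ℝ)) : EReal) *
        ((g k : EReal) - (gbar : EReal) - (((t k * -(hs k F') : ℝ)) : EReal))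
        = ((q k : ℝ) : EReal) := by
      rw [← EReal.coe_sub, ← EReal.coe_sub, ← EReal.coe_mul]
      norm_cast
      simp only [hq_def]
      ring
    rw [heq] at hQ
    exact EReal.coe_le_coe_iff.1 hQ
  set r : ℕ → ℝ := fun k => (F (xbar + t k • hs k) - F xbar - t k * hs k F'
      - (1 / 2) * (t k) ^ 2 * F'' (hs k) (hs k)) / (t k) ^ 2 with hr_def
  have hr : Tendsto r atTop (𝓝 0) := hTaylor t hs h ht0 htt hpw hGtop
  -- uniform boundedness (Banach–Steinhaus)
  obtain ⟨C, hC⟩ : ∃ C, ∀ k, ‖hs k‖ ≤ C := by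
    apply banach_steinhaus
    intro z
    have : Tendsto (fun k => ‖hs k z‖) atTop (𝓝 ‖h z‖) := (hpw z).norm
    obtain ⟨M, hM⟩ := this.bddAbove_range
    exact ⟨M, fun k => hM ⟨k, rfl⟩⟩
  have hnorm : ∀ k, ‖(xbar + t k • hs k) - xbar‖ = t k * ‖hs k‖ := by
    intro k
    have h1 : (xbar + t k • hs k) - xbar = t k • hs k := by abel
    have hns : ‖t k • hs k‖ = ‖t k‖ * ‖hs k‖ := by exact norm_smul (t k) (hs k)
    rw [h1, hns, Real.norm_eq_abs, abs_of_pos (ht0 k)]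
  have hev1 : ∀ᶠ k in atTop, ‖(xbar + t k • hs k) - xbar‖ ≤ ε := by
    have htC : Tendsto (fun k => t k * C) atTop (𝓝 0) := by
      simpa using htt.mul_const C
    filter_upwards [htC.eventually_lt_const hε] with k hk
    rw [hnorm k]
    have : t k * ‖hs k‖ ≤ t k * C :=
      mul_le_mul_of_nonneg_left (hC k) (le_of_lt (ht0 k))
    linarith
  have hgr : ∀ᶠ k in atTop,
      F xbar + gbar + c / 2 * ‖(xbar + t k • hs k) - xbar‖ ^ 2
        ≤ F (xbar + t k • hs k) + g k := by
    filter_upwards [hev1] with k hk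
    have hG := hgrowth _ hk
    rw [hGxbar, hGk k, ← EReal.coe_add, ← EReal.coe_add, ← EReal.coe_add] at hG
    exact_mod_cast hG
  have hsineq : ∀ᶠ k in atTop,
      c * ‖hs k‖ ^ 2 - 2 * r k - b ≤ F'' (hs k) (hs k) := by
    filter_upwards [hgr] with k hk
    have htk := ht0 k
    have ht2 : (0:ℝ) < (t k) ^ 2 := by positivity
    have hrk : r k * (t k) ^ 2 = F (xbar + t k • hs k) - F xbar - t k * hs k F'
        - (1 / 2) * (t k) ^ 2 * F'' (hs k) (hs k) := by
      simp only [hr_def]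
      field_simp
    rw [hnorm k] at hk
    have hA : c / 2 * (t k) ^ 2 * ‖hs k‖ ^ 2 - r k * (t k) ^ 2
        - 1 / 2 * (t k) ^ 2 * F'' (hs k) (hs k) ≤ g k - gbar + t k * hs k F' := by
      nlinarith [hk, hrk]
    have hpos : (0:ℝ) < 2 / (t k) ^ 2 := by positivity
    have hmul := mul_le_mul_of_nonneg_left hA (le_of_lt hpos)
    have hqk : q k = 2 / (t k) ^ 2 * (g k - gbar + t k * hs k F') := rfl
    have hcalc : 2 / (t k) ^ 2 * (c / 2 * (t k) ^ 2 * ‖hs k‖ ^ 2 - r k * (t k) ^ 2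
        - 1 / 2 * (t k) ^ 2 * F'' (hs k) (hs k))
        = c * ‖hs k‖ ^ 2 - 2 * r k - F'' (hs k) (hs k) := by
      field_simp
    have hq := hqb k
    rw [hqk] at hq
    rw [hcalc] at hmul
    linarith
  have hmain : ∀ δ : ℝ, 0 < δ → c * ‖h‖ ^ 2 - b - δ ≤ F'' h h := by
    intro δ hδ
    have hev2 := aux_norm_sq_event h hs hpw c hc (half_pos hδ)
    have hev3 : ∀ᶠ k in atTop, |r k| < δ / 4 := by
      have h4 : (0:ℝ) < δ / 4 := by positivity
      have := Metric.tendsto_nhds.mp hr (δ / 4) h4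
      simpa [Real.dist_eq] using this
    have hev4 : ∀ᶠ k in atTop,
        ((c * ‖h‖ ^ 2 - b - δ : ℝ) : EReal) ≤ ((F'' (hs k) (hs k) : ℝ) : EReal) := by
      filter_upwards [hsineq, hev2, hev3] with k h1 h2 h3
      rw [EReal.coe_le_coe_iff]
      have habs := abs_lt.1 h3
      linarith [habs.1, habs.2]
    have hbdd : IsBoundedUnder (· ≤ ·) atTop (fun k => ((F'' (hs k) (hs k) : ℝ) : EReal)) :=
      ⟨⊤, Eventually.of_forall fun _ => le_top⟩
    have hle : ((c * ‖h‖ ^ 2 - b - δ : ℝ) : EReal)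
        ≤ limsup (fun k => ((F'' (hs k) (hs k) : ℝ) : EReal)) atTop :=
      le_limsup_of_frequently_le hev4.frequently hbdd
    have := hle.trans husc
    exact_mod_cast this
  by_contra hcon
  push_neg at hcon
  have hδ : (0:ℝ) < (c * ‖h‖ ^ 2 - F'' h h - b) / 2 := by linarith
  have := hmain _ hδ
  linarith

/-- Theorem 2.4, second-order necessary condition.
`X = Y*` with `Y` a separable Banach space; `xbar ∈ dom G`; `F` admits the Taylor-type
expansion `hTaylor` with `F'(xbar) ∈ Y` and bounded bilinear `F''(xbar)`.  If `xbar` satisfies the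
quadratic growth condition with constants `c ≥ 0`, `ε > 0` and either (i) `h ↦ F''(xbar)h²`
is sequentially weak-* upper semicontinuous or (ii) `G` is strongly twice
epi-differentiable at `xbar` for `−F'(xbar)`, then
`F''(xbar)h² + G''(xbar, −F'(xbar); h) ≥ c‖h‖²` for all `h ∈ X`. -/
theorem second_order_necessary_condition
    {Y : Type*} [NormedAddCommGroup Y] [NormedSpace ℝ Y] [CompleteSpace Y]
    [TopologicalSpace.SeparableSpace Y]
    (G : (Y →L[ℝ] ℝ) → EReal) (hGbot : ∀ x, G x ≠ ⊥)
    (F : (Y →L[ℝ] ℝ) → ℝ)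
    (xbar : Y →L[ℝ] ℝ) (hxbar : G xbar ≠ ⊤)
    (F' : Y) (F'' : (Y →L[ℝ] ℝ) →L[ℝ] (Y →L[ℝ] ℝ) →L[ℝ] ℝ)
    (hTaylor : ∀ (t : ℕ → ℝ) (hs : ℕ → (Y →L[ℝ] ℝ)) (h : Y →L[ℝ] ℝ),
      (∀ k, 0 < t k) → Tendsto t atTop (𝓝 0) →
      (∀ z : Y, Tendsto (fun k => hs k z) atTop (𝓝 (h z))) →
      (∀ k, G (xbar + t k • hs k) ≠ ⊤) →
      Tendsto (fun k => (F (xbar + t k • hs k) - F xbar - t k * hs k F'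
          - (1 / 2) * (t k) ^ 2 * F'' (hs k) (hs k)) / (t k) ^ 2) atTop (𝓝 0))
    (c ε : ℝ) (hc : 0 ≤ c) (hε : 0 < ε)
    (hgrowth : ∀ x : Y →L[ℝ] ℝ, ‖x - xbar‖ ≤ ε →
      ((F xbar : ℝ) : EReal) + G xbar + ((c / 2 * ‖x - xbar‖ ^ 2 : ℝ) : EReal)
        ≤ ((F x : ℝ) : EReal) + G x)
    (hAlt :
      (∀ (h : Y →L[ℝ] ℝ) (hs : ℕ → (Y →L[ℝ] ℝ)),
        (∀ z : Y, Tendsto (fun k => hs k z) atTop (𝓝 (h z))) →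
        limsup (fun k => ((F'' (hs k) (hs k) : ℝ) : EReal)) atTop
          ≤ ((F'' h h : ℝ) : EReal))
      ∨ StronglyTwiceEpiDiff G xbar (-F')) :
    ∀ h : Y →L[ℝ] ℝ,
      ((c * ‖h‖ ^ 2 : ℝ) : EReal)
        ≤ ((F'' h h : ℝ) : EReal) + weakStarSecondSubderiv G xbar (-F') h := by
  intro h
  set a : ℝ := c * ‖h‖ ^ 2 - F'' h h with ha_def
  suffices hsuff : ((a : ℝ) : EReal) ≤ weakStarSecondSubderiv G xbar (-F') h by
    calc ((c * ‖h‖ ^ 2 : ℝ) : EReal)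
        = ((F'' h h : ℝ) : EReal) + ((a : ℝ) : EReal) := by
          rw [← EReal.coe_add]
          norm_cast
          simp only [ha_def]
          ring
      _ ≤ _ := add_le_add le_rfl hsuff
  by_contra hcon
  push_neg at hcon
  rcases hAlt with husc | hste
  · -- case (i): sequential weak-* upper semicontinuity of F''
    unfold weakStarSecondSubderiv at hcon
    obtain ⟨L, hLmem, hLa⟩ := sInf_lt_iff.mp hcon
    obtain ⟨t, hs, ht0, htt, hpw, hLdef⟩ := hLmem
    obtain ⟨b, hbL, hba⟩ := EReal.exists_between_coe_real hLa
    rw [hLdef] at hbL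
    have hfreq := frequently_lt_of_liminf_lt (by isBoundedDefault) hbL
    obtain ⟨φ, hφmono, hφ⟩ := Filter.extraction_of_frequently_atTop hfreq
    have hpwφ : ∀ z : Y, Tendsto (fun k => hs (φ k) z) atTop (𝓝 (h z)) :=
      fun z => (hpw z).comp hφmono.tendsto_atTop
    have key := aux_core_bound G hGbot F xbar hxbar F' F'' hTaylor c ε hc hε hgrowth h
      (fun k => t (φ k)) (fun k => hs (φ k)) (fun k => ht0 (φ k))
      (htt.comp hφmono.tendsto_atTop) hpwφ b
      (fun k => le_of_lt (hφ k)) (husc h (fun k => hs (φ k)) hpwφ)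
    have hba' : b < a := EReal.coe_lt_coe_iff.1 hba
    simp only [ha_def] at key hba'
    linarith
  · -- case (ii): strong twice epi-differentiability
    obtain ⟨hs, hconv, hQtend⟩ := hste h (fun k => 1 / ((k : ℝ) + 1))
      (fun k => by positivity) tendsto_one_div_add_atTop_nhds_zero_nat
    obtain ⟨b, hbL, hba⟩ := EReal.exists_between_coe_real hcon
    have hev := hQtend.eventually_lt_const hbL
    obtain ⟨φ, hφmono, hφ⟩ := Filter.extraction_of_frequently_atTop hev.frequently
    have hpw : ∀ z : Y, Tendsto (fun k => hs k z) atTop (𝓝 (h z)) := by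
      intro z
      have hcz : Continuous fun f : Y →L[ℝ] ℝ => f z :=
        continuous_id.clm_apply continuous_const
      exact (hcz.tendsto h).comp hconv
    have hpwφ : ∀ z : Y, Tendsto (fun k => hs (φ k) z) atTop (𝓝 (h z)) :=
      fun z => (hpw z).comp hφmono.tendsto_atTop
    have hFcont : Continuous fun x : Y →L[ℝ] ℝ => F'' x x :=
      F''.continuous.clm_apply continuous_id
    have hFt : Tendsto (fun k => F'' (hs (φ k)) (hs (φ k))) atTop (𝓝 (F'' h h)) :=
      ((hFcont.tendsto h).comp hconv).comp hφmono.tendsto_atTop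
    have husc2 : limsup (fun k => ((F'' (hs (φ k)) (hs (φ k)) : ℝ) : EReal)) atTop
        ≤ ((F'' h h : ℝ) : EReal) := by
      have := (EReal.tendsto_coe.2 hFt).limsup_eq
      exact this.le
    have key := aux_core_bound G hGbot F xbar hxbar F' F'' hTaylor c ε hc hε hgrowth h
      (fun k => 1 / ((φ k : ℝ) + 1)) (fun k => hs (φ k)) (fun k => by positivity)
      (tendsto_one_div_add_atTop_nhds_zero_nat.comp hφmono.tendsto_atTop) hpwφ b
      (fun k => le_of_lt (hφ k)) husc2
    have hba' : b < a := EReal.coe_lt_coe_iff.1 hba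
    simp only [ha_def] at key hba'
    linarith
end

section
/- Second-order sufficient condition: Assume that the map h ↦ F''(x̄)(h,h) is sequentially weak-* lower semicontinuous on X, that F''(x̄)(h,h) + G''(x̄, −F'(x̄); h) > 0 for all h ∈ X \ {0}, and that the non-degeneracy condition (NDC) holds: for all sequences h_k ⇀* 0 in X with ‖h_k‖_X = 1 and t_k ↓ 0 one has liminf_{k→∞} [ (1/t_k²)(G(x̄ + t_k h_k) − G(x̄)) + ⟨F'(x̄), h_k⟩/t_k + (1/2) F''(x̄)(h_k,h_k) ] > 0. Then there exist c > 0 and ε > 0 such that F(x) + G(x) ≥ F(x̄) + G(x̄) + (c/2)‖x − x̄‖²_X for all x ∈ B_ε(x̄). -/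
open Filter Topology

lemma seq_alaoglu {Y : Type*} [NormedAddCommGroup Y] [NormedSpace ℝ Y]
    [TopologicalSpace.SeparableSpace Y]
    (f : ℕ → (Y →L[ℝ] ℝ)) (hf : ∀ k, ‖f k‖ ≤ 1) :
    ∃ (h : Y →L[ℝ] ℝ) (ψ : ℕ → ℕ), StrictMono ψ ∧
      ∀ z : Y, Tendsto (fun k => f (ψ k) z) atTop (𝓝 (h z)) := by
  classical
  set S : Set (WeakDual ℝ Y) :=
    (WeakDual.toStrongDual (𝕜 := ℝ) (E := Y)) ⁻¹' Metric.closedBall (0 : StrongDual ℝ Y) 1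
    with hS
  have hScomp : IsCompact S := WeakDual.isCompact_closedBall (𝕜 := ℝ) (E := Y) 0 1
  haveI : CompactSpace S := isCompact_iff_compactSpace.mp hScomp
  obtain ⟨z, hz⟩ := TopologicalSpace.exists_dense_seq Y
  set φ : S → (ℕ → ℝ) := fun g n => (g : WeakDual ℝ Y) (z n) with hφ
  have hφc : Continuous φ := by
    refine continuous_pi fun n => ?_
    exact (WeakDual.eval_continuous (z n)).comp continuous_subtype_val
  have hφinj : Function.Injective φ := by
    intro g₁ g₂ hgg
    ext1
    refine ContinuousLinearMap.ext_on (hz.mono Submodule.subset_span) ?_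
    rintro x ⟨n, rfl⟩
    exact congrFun hgg n
  have hemb := hφc.isClosedEmbedding hφinj
  haveI : TopologicalSpace.MetrizableSpace S := hemb.toIsEmbedding.metrizableSpace
  set u : ℕ → S := fun k => ⟨WeakDual.toStrongDual.symm (f k), by
    simp [hS, Metric.mem_closedBall]
    simpa using hf k⟩ with hu
  obtain ⟨x, _, ψ, hψ, hconv⟩ := isCompact_univ.tendsto_subseq (x := u) (fun n => trivial)
  refine ⟨WeakDual.toStrongDual x.1, ψ, hψ, fun zz => ?_⟩
  have := ((WeakDual.eval_continuous zz).comp continuous_subtype_val).continuousAt.tendsto.comp hconv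
  exact this

lemma aux_norm_inv_smul {Y : Type*} [NormedAddCommGroup Y] [NormedSpace ℝ Y]
    (f : Y →L[ℝ] ℝ) (h : ‖f‖ ≠ 0) : ‖‖f‖⁻¹ • f‖ = 1 := by
  have e : ‖(‖f‖⁻¹ : ℝ) • f‖ = ‖(‖f‖⁻¹ : ℝ)‖ * ‖f‖ := norm_smul (‖f‖⁻¹) f
  rw [e, norm_inv, norm_norm, inv_mul_cancel₀ h]


set_option maxHeartbeats 1000000 in
/-- Theorem 2.6, second-order sufficient condition.
`X = Y*` with `Y` a separable Banach space; `x̄ ∈ dom G`; `F` admits the Taylor-type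
expansion `hTaylor`.  If `h ↦ F''(x̄)h²` is sequentially weak-* lower semicontinuous,
`F''(x̄)h² + G''(x̄, −F'(x̄); h) > 0` for all `h ≠ 0`, and the non-degeneracy condition
(NDC) holds, then there are `c > 0`, `ε > 0` with
`F(x) + G(x) ≥ F(x̄) + G(x̄) + (c/2)‖x − x̄‖²` for all `x ∈ B_ε(x̄)`. -/
theorem second_order_sufficient_condition
    {Y : Type*} [NormedAddCommGroup Y] [NormedSpace ℝ Y] [CompleteSpace Y]
    [TopologicalSpace.SeparableSpace Y]
    (G : (Y →L[ℝ] ℝ) → EReal) (hGbot : ∀ x, G x ≠ ⊥)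
    (F : (Y →L[ℝ] ℝ) → ℝ)
    (xbar : Y →L[ℝ] ℝ) (hxbar : G xbar ≠ ⊤)
    (F' : Y) (F'' : (Y →L[ℝ] ℝ) →L[ℝ] (Y →L[ℝ] ℝ) →L[ℝ] ℝ)
    (hTaylor : ∀ (t : ℕ → ℝ) (hs : ℕ → (Y →L[ℝ] ℝ)) (h : Y →L[ℝ] ℝ),
      (∀ k, 0 < t k) → Tendsto t atTop (𝓝 0) →
      (∀ z : Y, Tendsto (fun k => hs k z) atTop (𝓝 (h z))) →
      (∀ k, G (xbar + t k • hs k) ≠ ⊤) →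
      Tendsto (fun k => (F (xbar + t k • hs k) - F xbar - t k * hs k F'
          - (1 / 2) * (t k) ^ 2 * F'' (hs k) (hs k)) / (t k) ^ 2) atTop (𝓝 0))
    -- sequential weak-* lower semicontinuity of `h ↦ F''(x̄)h²`
    (hlsc : ∀ (h : Y →L[ℝ] ℝ) (hs : ℕ → (Y →L[ℝ] ℝ)),
      (∀ z : Y, Tendsto (fun k => hs k z) atTop (𝓝 (h z))) →
      ((F'' h h : ℝ) : EReal) ≤ liminf (fun k => ((F'' (hs k) (hs k) : ℝ) : EReal)) atTop)
    -- positivity of the second-order expression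
    (hSSC : ∀ h : Y →L[ℝ] ℝ, h ≠ 0 →
      (0 : EReal) < ((F'' h h : ℝ) : EReal) + weakStarSecondSubderiv G xbar (-F') h)
    -- non-degeneracy condition (NDC)
    (hNDC : ∀ (t : ℕ → ℝ) (hs : ℕ → (Y →L[ℝ] ℝ)),
      (∀ k, 0 < t k) → Tendsto t atTop (𝓝 0) →
      (∀ z : Y, Tendsto (fun k => hs k z) atTop (𝓝 (0 : ℝ))) →
      (∀ k, ‖hs k‖ = 1) →
      (0 : EReal) < liminf (fun k =>
        ((1 / (t k) ^ 2 : ℝ) : EReal) * (G (xbar + t k • hs k) - G xbar)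
          + ((hs k F' / t k + (1 / 2) * F'' (hs k) (hs k) : ℝ) : EReal)) atTop) :
    ∃ c : ℝ, 0 < c ∧ ∃ ε : ℝ, 0 < ε ∧
      ∀ x : Y →L[ℝ] ℝ, ‖x - xbar‖ ≤ ε →
        ((F xbar : ℝ) : EReal) + G xbar + ((c / 2 * ‖x - xbar‖ ^ 2 : ℝ) : EReal)
          ≤ ((F x : ℝ) : EReal) + G x := by
  by_contra hcon
  push_neg at hcon
  have hg0 : G xbar = (((G xbar).toReal : ℝ) : EReal) := (EReal.coe_toReal hxbar (hGbot xbar)).symm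
  set g0 : ℝ := (G xbar).toReal with hg0def
  have hcpos : ∀ k : ℕ, (0:ℝ) < 1 / (k + 1) := fun k => by positivity
  choose x hx1 hx2 using fun k : ℕ => hcon (1/(k+1)) (hcpos k) (1/(k+1)) (hcpos k)
  -- G (x k) is finite
  have hGk : ∀ k, G (x k) ≠ ⊤ := by
    intro k htop
    have h2 := hx2 k
    rw [htop, hg0, EReal.add_top_of_ne_bot (EReal.coe_ne_bot _)] at h2
    have h3 : ((F xbar : ℝ) : EReal) + ((g0 : ℝ) : EReal)
        + ((1/(k+1)/2 * ‖x k - xbar‖^2 : ℝ) : EReal) ≤ (((F xbar + g0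
        + 1/(k+1)/2 * ‖x k - xbar‖^2 : ℝ)) : EReal) := by norm_cast
    exact lt_irrefl _ ((h2.trans_le h3).trans_le le_top)
  set g : ℕ → ℝ := fun k => (G (x k)).toReal with hgdef
  have hgk : ∀ k, G (x k) = ((g k : ℝ) : EReal) :=
    fun k => (EReal.coe_toReal (hGk k) (hGbot (x k))).symm
  set t : ℕ → ℝ := fun k => ‖x k - xbar‖ with htdef
  have htval : ∀ k, t k = ‖x k - xbar‖ := fun k => rfl
  have hx2' : ∀ k, F (x k) + g k < F xbar + g0 + 1/(k+1)/2 * (t k)^2 := by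
    intro k
    have h2 := hx2 k
    rw [hgk k, hg0] at h2
    rw [htval k]
    exact_mod_cast h2
  have ht0 : ∀ k, 0 < t k := by
    intro k
    rcases (norm_nonneg (x k - xbar)).lt_or_eq with hlt | heq0
    · exact hlt
    · exfalso
      have hxk : x k = xbar := by
        have h5 : x k - xbar = 0 := norm_eq_zero.mp heq0.symm
        have := sub_eq_zero.mp h5
        exact this
      have htk : t k = 0 := by rw [htval k, hxk, sub_self, norm_zero]
      have hgg : g k = g0 := by
        have := hgk k
        rw [hxk, hg0] at this
        exact_mod_cast this.symm
      have h2 := hx2' k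
      rw [hxk, htk, hgg] at h2
      nlinarith [h2]
  set h : ℕ → (Y →L[ℝ] ℝ) := fun k => (t k)⁻¹ • (x k - xbar) with hhdef
  have hnorm : ∀ k, ‖h k‖ = 1 := by
    intro k
    show ‖(t k)⁻¹ • (x k - xbar)‖ = 1
    rw [htval k]
    exact aux_norm_inv_smul _ (by rw [← htval k]; exact (ht0 k).ne')
  have hxk_eq : ∀ k, xbar + t k • h k = x k := by
    intro k
    have h5 : t k • ((t k)⁻¹ • (x k - xbar)) = x k - xbar := by
      rw [smul_smul, mul_inv_cancel₀ (ht0 k).ne', one_smul]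
    calc xbar + t k • h k = xbar + (x k - xbar) := by rw [hhdef]; exact congrArg _ h5
      _ = x k := by abel
  have htlim : Tendsto t atTop (𝓝 0) := by
    refine squeeze_zero (fun k => norm_nonneg _) (fun k => hx1 k) ?_
    exact tendsto_one_div_add_atTop_nhds_zero_nat
  obtain ⟨hlim, ψ, hψ, hψconv⟩ := seq_alaoglu h (fun k => le_of_eq (hnorm k))
  set T : ℕ → ℝ := fun j => t (ψ j) with hTdef
  set H : ℕ → (Y →L[ℝ] ℝ) := fun j => h (ψ j) with hHdef
  have hTpos : ∀ j, 0 < T j := fun j => ht0 (ψ j)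
  have hT2 : ∀ j, (0:ℝ) < (T j)^2 := fun j => pow_pos (hTpos j) 2
  have hTlim : Tendsto T atTop (𝓝 0) := htlim.comp hψ.tendsto_atTop
  have hxk_eq' : ∀ j, xbar + T j • H j = x (ψ j) := fun j => hxk_eq (ψ j)
  have hGT : ∀ j, G (xbar + T j • H j) ≠ ⊤ := by
    intro j; rw [hxk_eq' j]; exact hGk (ψ j)
  have hGTval : ∀ j, G (xbar + T j • H j) = ((g (ψ j) : ℝ) : EReal) := by
    intro j; rw [hxk_eq' j]; exact hgk (ψ j)
  -- Taylor remainder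
  set E : ℕ → ℝ := fun j => (F (xbar + T j • H j) - F xbar - T j * H j F'
      - (1/2) * (T j)^2 * F'' (H j) (H j)) / (T j)^2 with hEdef
  have hElim : Tendsto E atTop (𝓝 0) :=
    hTaylor T H hlim hTpos hTlim hψconv hGT
  have hFx : ∀ j, F (x (ψ j)) - F xbar - T j * H j F'
      - (1/2) * (T j)^2 * F'' (H j) (H j) = E j * (T j)^2 := by
    intro j
    rw [hEdef]
    simp only
    rw [div_mul_cancel₀ _ (hT2 j).ne', hxk_eq' j]
  -- the quotient sequence
  set A : ℕ → ℝ := fun j => (g (ψ j) - g0)/(T j)^2 + H j F' / T j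
      + (1/2) * F'' (H j) (H j) with hAdef
  set δ : ℕ → ℝ := fun j => 1/((ψ j : ℝ)+1)/2 - E j with hδdef
  have hAδ : ∀ j, A j < δ j := by
    intro j
    have h2 := hx2' (ψ j)
    have e1 : A j * (T j)^2 = (g (ψ j) - g0) + T j * (H j F')
        + (1/2)*(T j)^2*(F'' (H j) (H j)) := by
      have hTne : T j ≠ 0 := (hTpos j).ne'
      rw [hAdef]
      field_simp
    have e2 := hFx j
    refine lt_of_mul_lt_mul_right ?_ (hT2 j).le
    have e3 : δ j * (T j)^2 = 1/((ψ j : ℝ)+1)/2 * (T j)^2 - E j * (T j)^2 := by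
      rw [hδdef]; ring
    rw [e1, e3]
    nlinarith [h2, e2]
  have hδlim : Tendsto δ atTop (𝓝 0) := by
    have h1 : Tendsto (fun j => 1/((ψ j : ℝ)+1)/2) atTop (𝓝 0) := by
      have := ((tendsto_one_div_add_atTop_nhds_zero_nat (𝕜 := ℝ)).comp hψ.tendsto_atTop).div_const 2
      simpa using this
    have h2 := h1.sub hElim
    rw [hδdef]
    simp only [one_div] at h2 ⊢
    simpa using h2
  -- liminf of b*A (in EReal) is ≤ 0
  have liminfA_le : ∀ (b : ℝ), 0 < b →
      liminf (fun j => ((b * A j : ℝ) : EReal)) atTop ≤ 0 := by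
    intro b hb
    have h1 : liminf (fun j => ((b * A j : ℝ) : EReal)) atTop
        ≤ liminf (fun j => ((b * δ j : ℝ) : EReal)) atTop := by
      refine Filter.liminf_le_liminf ?_
      refine Eventually.of_forall fun j => ?_
      have : b * A j ≤ b * δ j := by nlinarith [hAδ j]
      exact_mod_cast this
    have h2 : Tendsto (fun j => ((b * δ j : ℝ) : EReal)) atTop (𝓝 (((0:ℝ)) : EReal)) := by
      refine (EReal.tendsto_coe).mpr ?_
      have h4 := hδlim.const_mul b
      rw [mul_zero] at h4
      exact h4
    have h3 := h1.trans (le_of_eq h2.liminf_eq)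
    exact h3.trans_eq EReal.coe_zero
  by_cases hlim0 : hlim = 0
  · -- NDC contradiction
    have hconv0 : ∀ z : Y, Tendsto (fun j => H j z) atTop (𝓝 (0:ℝ)) := by
      intro z
      have h5 := hψconv z
      rw [hlim0] at h5
      simpa using h5
    have hndc := hNDC T H hTpos hTlim hconv0 (fun j => hnorm (ψ j))
    have heq : (fun j => ((1 / (T j) ^ 2 : ℝ) : EReal) * (G (xbar + T j • H j) - G xbar)
          + ((H j F' / T j + (1 / 2) * F'' (H j) (H j) : ℝ) : EReal))
        = fun j => ((1 * A j : ℝ) : EReal) := by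
      funext j
      rw [hGTval j, hg0]
      norm_cast
      have hTne : T j ≠ 0 := (hTpos j).ne'
      rw [hAdef]
      field_simp
      ring
    rw [heq] at hndc
    exact absurd (liminfA_le 1 one_pos) (not_le.mpr hndc)
  · -- SSC contradiction
    have hG'' : weakStarSecondSubderiv G xbar (-F') hlim
        ≤ liminf (fun j => ((2 / (T j) ^ 2 : ℝ) : EReal) *
          (G (xbar + T j • H j) - G xbar - ((T j * H j (-F') : ℝ) : EReal))) atTop :=
      sInf_le ⟨T, H, hTpos, hTlim, hψconv, rfl⟩
    have hBeq : (fun j => ((2 / (T j) ^ 2 : ℝ) : EReal) *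
          (G (xbar + T j • H j) - G xbar - ((T j * H j (-F') : ℝ) : EReal)))
        = fun j => ((2 * A j - F'' (H j) (H j) : ℝ) : EReal) := by
      funext j
      rw [hGTval j, hg0, show (H j) (-F') = -((H j) F') from map_neg _ _]
      norm_cast
      have hTne : T j ≠ 0 := (hTpos j).ne'
      rw [hAdef]
      field_simp
      ring
    rw [hBeq] at hG''
    have hssc := hSSC hlim hlim0
    have hchain : ((F'' hlim hlim : ℝ) : EReal) + weakStarSecondSubderiv G xbar (-F') hlim
        ≤ liminf (fun j => ((2 * A j : ℝ) : EReal)) atTop := by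
      have h1 : ((F'' hlim hlim : ℝ) : EReal) + weakStarSecondSubderiv G xbar (-F') hlim
          ≤ liminf (fun j => ((F'' (H j) (H j) : ℝ) : EReal)) atTop
            + liminf (fun j => ((2 * A j - F'' (H j) (H j) : ℝ) : EReal)) atTop :=
        add_le_add (hlsc hlim H hψconv) hG''
      refine h1.trans ?_
      refine (EReal.le_liminf_add (f := atTop)
        (u := fun j => ((F'' (H j) (H j) : ℝ) : EReal))
        (v := fun j => ((2 * A j - F'' (H j) (H j) : ℝ) : EReal))).trans (le_of_eq ?_)
      apply Filter.liminf_congr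
      refine Eventually.of_forall fun j => ?_
      show ((F'' (H j) (H j) : ℝ) : EReal) + ((2 * A j - F'' (H j) (H j) : ℝ) : EReal)
        = ((2 * A j : ℝ) : EReal)
      norm_cast
      ring
    have hle0 := liminfA_le 2 two_pos
    exact absurd (hssc.trans_le (hchain.trans hle0)) (lt_irrefl _)
end

section
/- Let j ∈ C¹(ℝ) with locally Lipschitz continuous derivative j', and let w, z ∈ ℝ. Then the following are equivalent: (i) j''(w; z) := lim_{t↓0} (2/t²)( j(w + t z) − j(w) − t j'(w) z ) exists in ℝ; (ii) D²j(w; z) := lim_{t↓0} ( j'(w + t z) − j'(w) ) / t exists in ℝ. Moreover, in this case j''(w; z) = D²j(w; z) · z. -/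
open Filter Topology
open Set


set_option maxHeartbeats 1600000 in
lemma core_fwd (h H : ℝ → ℝ) (hder : ∀ t, HasDerivAt h (H t) t)
    (hcont : Continuous H) (C δ₀ : ℝ) (hC : 0 ≤ C) (hδ₀ : 0 < δ₀)
    (hlipH : ∀ a ∈ Ioo (0:ℝ) δ₀, ∀ b ∈ Ioo (0:ℝ) δ₀, |H a - H b| ≤ C * |a - b|)
    (L : ℝ) (hL : Tendsto (fun t => 2 / t ^ 2 * h t) (𝓝[>] 0) (𝓝 L)) :
    Tendsto (fun t => H t / t) (𝓝[>] 0) (𝓝 L) := by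
  rw [Metric.tendsto_nhdsWithin_nhds] at hL ⊢
  intro ε' hε'
  set M : ℝ := C + |L| + 1 with hMdef
  have hM : 0 < M := by positivity
  set ε : ℝ := min 1 (ε' / (2 * M)) with hεdef
  have hε : 0 < ε := lt_min one_pos (by positivity)
  have hε1 : ε ≤ 1 := min_le_left _ _
  have hεM : ε * M ≤ ε' / 2 := by
    have h5 := min_le_right 1 (ε' / (2 * M))
    calc ε * M ≤ (ε' / (2 * M)) * M := by nlinarith
      _ = ε' / 2 := by field_simp
  clear_value ε M
  obtain ⟨δ₁, hδ₁, hd⟩ := hL (ε ^ 2 / 3) (by positivity)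
  refine ⟨min (δ₁ / 2) (δ₀ / 2), by positivity, fun t ht hdist => ?_⟩
  have ht0 : (0:ℝ) < t := ht
  have ht2 : (0:ℝ) < t ^ 2 := by positivity
  have htd : t < min (δ₁ / 2) (δ₀ / 2) := by
    rwa [Real.dist_eq, sub_zero, abs_of_pos ht0] at hdist
  have htd1 : t < δ₁ / 2 := lt_of_lt_of_le htd (min_le_left _ _)
  have htd0 : t < δ₀ / 2 := lt_of_lt_of_le htd (min_le_right _ _)
  set u : ℝ := t * (1 + ε) with hudef
  have hu0 : 0 < u := by nlinarith
  have htu : t < u := by nlinarith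
  have huδ₀ : u < δ₀ := by nlinarith
  have huδ₁ : u < δ₁ := by nlinarith
  have hut : u - t = ε * t := by rw [hudef]; ring
  -- FTC over [t, u]
  have hftc : ∫ s in t..u, H s = h u - h t :=
    intervalIntegral.integral_eq_sub_of_hasDerivAt (fun x _ => hder x)
      (hcont.intervalIntegrable t u)
  have hest1 : |h u - h t - H t * (u - t)| ≤ C * (ε * t) * |u - t| := by
    have heq : ∫ s in t..u, (H s - H t) = h u - h t - H t * (u - t) := by
      rw [intervalIntegral.integral_sub (hcont.intervalIntegrable t u)
        intervalIntegrable_const, hftc, intervalIntegral.integral_const, smul_eq_mul]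
      ring
    rw [← heq, ← Real.norm_eq_abs]
    refine intervalIntegral.norm_integral_le_of_norm_le_const (fun s hs => ?_)
    rw [Set.uIoc_of_le htu.le] at hs
    have hsδ : s ∈ Ioo (0:ℝ) δ₀ := ⟨ht0.trans hs.1, lt_of_le_of_lt hs.2 huδ₀⟩
    have htδ : t ∈ Ioo (0:ℝ) δ₀ := ⟨ht0, by linarith⟩
    rw [Real.norm_eq_abs]
    calc |H s - H t| ≤ C * |s - t| := hlipH s hsδ t htδ
      _ ≤ C * (ε * t) := by
          apply mul_le_mul_of_nonneg_left _ hC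
          rw [abs_of_pos (by linarith [hs.1] : (0:ℝ) < s - t)]
          have hs2 := hs.2; linarith
  rw [hut, abs_of_pos (by positivity : (0:ℝ) < ε * t)] at hest1
  set R : ℝ := h u - h t - H t * (u - t) with hRdef
  -- limit values of the quadratic quotient
  set P : ℝ := 2 / u ^ 2 * h u with hPdef
  set Q : ℝ := 2 / t ^ 2 * h t with hQdef
  have hφu := hd (x := u) hu0 (by rw [Real.dist_eq, sub_zero, abs_of_pos hu0]; linarith)
  have hφt := hd (x := t) ht0 (by rw [Real.dist_eq, sub_zero, abs_of_pos ht0]; linarith)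
  rw [Real.dist_eq] at hφu hφt
  rw [← hPdef] at hφu
  rw [← hQdef] at hφt
  have hune : u ≠ 0 := ne_of_gt hu0
  have hu_eq : h u = P * u ^ 2 / 2 := by
    rw [hPdef]; field_simp
  have ht_eq : h t = Q * t ^ 2 / 2 := by
    rw [hQdef]; field_simp
  set S : ℝ := (1 + ε) ^ 2 * (P - L) - (Q - L) + L * ε ^ 2 with hSdef
  have e1 : H t * (ε * t) - L * (ε * t ^ 2) = -R + t ^ 2 / 2 * S := by
    rw [hSdef, hRdef, hu_eq, ht_eq, hudef]; ring
  clear_value S P Q R u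
  clear hd hL hder hcont hftc hlipH hdist htd hudef hune
  have hS : |S| ≤ 2 * ε ^ 2 + |L| * ε ^ 2 := by
    have h4 : (1 + ε) ^ 2 ≤ 4 := by nlinarith
    have hb1 : |(1 + ε) ^ 2 * (P - L)| ≤ 4 * (ε ^ 2 / 3) := by
      rw [abs_mul, abs_of_nonneg (by positivity : (0:ℝ) ≤ (1 + ε) ^ 2)]
      calc (1 + ε) ^ 2 * |P - L| ≤ 4 * |P - L| :=
            mul_le_mul_of_nonneg_right h4 (abs_nonneg _)
        _ ≤ 4 * (ε ^ 2 / 3) := by linarith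
    have hb3 : |L * ε ^ 2| = |L| * ε ^ 2 := by
      rw [abs_mul, abs_of_nonneg (by positivity : (0:ℝ) ≤ ε ^ 2)]
    calc |S| ≤ |(1 + ε) ^ 2 * (P - L) - (Q - L)| + |L * ε ^ 2| := by
          rw [hSdef]; exact abs_add_le _ _
      _ ≤ |(1 + ε) ^ 2 * (P - L)| + |Q - L| + |L * ε ^ 2| := by
          linarith [abs_sub ((1 + ε) ^ 2 * (P - L)) (Q - L)]
      _ ≤ 2 * ε ^ 2 + |L| * ε ^ 2 := by linarith [sq_nonneg ε, hb1, hφt, hb3]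
  have hR : |R| ≤ C * (ε * t) * (ε * t) := by rw [hRdef, hut]; exact hest1
  have hnum : |H t * (ε * t) - L * (ε * t ^ 2)| ≤ C * (ε * t) * (ε * t) + t ^ 2 / 2 * (2 * ε ^ 2 + |L| * ε ^ 2) := by
    rw [e1]
    calc |-R + t ^ 2 / 2 * S| ≤ |R| + |t ^ 2 / 2 * S| := by
          exact (abs_add_le (-R) (t ^ 2 / 2 * S)).trans_eq (by rw [abs_neg])
      _ ≤ C * (ε * t) * (ε * t) + t ^ 2 / 2 * (2 * ε ^ 2 + |L| * ε ^ 2) := by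
          rw [abs_mul, abs_of_nonneg (by positivity : (0:ℝ) ≤ t ^ 2 / 2)]
          have := mul_le_mul_of_nonneg_left hS (by positivity : (0:ℝ) ≤ t ^ 2 / 2)
          linarith
  -- conclude
  have e2 : H t / t - L = (H t * (ε * t) - L * (ε * t ^ 2)) / (ε * t ^ 2) := by
    field_simp
  rw [Real.dist_eq, e2, abs_div, abs_of_pos (by positivity : (0:ℝ) < ε * t ^ 2),
    div_lt_iff₀ (by positivity : (0:ℝ) < ε * t ^ 2)]
  have hfin : ε * (C + 1 + |L| / 2) < ε' := by
    nlinarith [mul_nonneg hε.le (abs_nonneg L)]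
  have hq : C * (ε * t) * (ε * t) + t ^ 2 / 2 * (2 * ε ^ 2 + |L| * ε ^ 2) < ε' * (ε * t ^ 2) := by
    have h7 : ε * (C + 1 + |L| / 2) * (ε * t ^ 2) < ε' * (ε * t ^ 2) :=
      mul_lt_mul_of_pos_right hfin (by positivity)
    have h8 : C * (ε * t) * (ε * t) + t ^ 2 / 2 * (2 * ε ^ 2 + |L| * ε ^ 2)
        = ε * (C + 1 + |L| / 2) * (ε * t ^ 2) := by ring
    linarith
  linarith


lemma core_back (h H : ℝ → ℝ) (hder : ∀ t, HasDerivAt h (H t) t)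
    (hcont : Continuous H) (h0 : h 0 = 0) (M : ℝ)
    (hM : Tendsto (fun t => H t / t) (𝓝[>] 0) (𝓝 M)) :
    Tendsto (fun t => 2 / t ^ 2 * h t) (𝓝[>] 0) (𝓝 M) := by
  rw [Metric.tendsto_nhdsWithin_nhds] at hM ⊢
  intro ε hε
  obtain ⟨δ, hδ, hd⟩ := hM (ε/4) (by positivity)
  refine ⟨δ, hδ, fun t ht hdist => ?_⟩
  have ht0 : (0:ℝ) < t := ht
  have htδ : t < δ := by rwa [Real.dist_eq, sub_zero, abs_of_pos ht0] at hdist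
  have hint : ∀ s : ℝ, IntervalIntegrable H MeasureTheory.volume 0 s :=
    fun s => hcont.intervalIntegrable 0 s
  have hftc : ∫ s in (0:ℝ)..t, H s = h t := by
    rw [intervalIntegral.integral_eq_sub_of_hasDerivAt (fun x _ => hder x) (hint t), h0, sub_zero]
  have hint2 : IntervalIntegrable (fun s => H s - M * s) MeasureTheory.volume 0 t :=
    (hcont.sub (continuous_const.mul continuous_id)).intervalIntegrable 0 t
  have heq : ∫ s in (0:ℝ)..t, (H s - M * s) = h t - M * t ^ 2 / 2 := by
    rw [intervalIntegral.integral_sub (hint t) ((by fun_prop : Continuous fun s : ℝ => M * s).intervalIntegrable 0 t),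
      hftc, intervalIntegral.integral_const_mul]
    rw [integral_id]
    ring
  have key : |h t - M * t ^ 2 / 2| ≤ ε / 4 * t * |t - 0| := by
    rw [← heq, ← Real.norm_eq_abs]
    refine intervalIntegral.norm_integral_le_of_norm_le_const (fun s hs => ?_)
    rw [Set.uIoc_of_le ht0.le] at hs
    have hs0 : 0 < s := hs.1
    have hst : s ≤ t := hs.2
    have := hd (x := s) hs0 (by rw [Real.dist_eq, sub_zero, abs_of_pos hs0]; linarith)
    rw [Real.dist_eq] at this
    have h1 : H s - M * s = s * (H s / s - M) := by field_simp
    rw [Real.norm_eq_abs, h1, abs_mul, abs_of_pos hs0]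
    calc s * |H s / s - M| ≤ s * (ε/4) := by nlinarith [abs_nonneg (H s / s - M)]
      _ ≤ ε / 4 * t := by nlinarith
  rw [Real.dist_eq]
  have ht2 : (0:ℝ) < t ^ 2 := by positivity
  have h2 : 2 / t ^ 2 * h t - M = 2 / t ^ 2 * (h t - M * t ^ 2 / 2) := by field_simp
  rw [h2, abs_mul, abs_of_pos (by positivity : (0:ℝ) < 2 / t ^ 2)]
  rw [sub_zero, abs_of_pos ht0] at key
  calc 2 / t ^ 2 * |h t - M * t ^ 2 / 2| ≤ 2 / t ^ 2 * (ε / 4 * t * t) := by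
        apply mul_le_mul_of_nonneg_left _ (by positivity)
        exact key
    _ = ε / 2 := by field_simp; ring
    _ < ε := by linarith


/-- Lemma 3.10 / `lem:quadratic_approximation_vs_second_derivative`.
Let `j ∈ C¹(ℝ)` with locally Lipschitz continuous derivative `j'` and let `w, z ∈ ℝ`.
Then the existence of
`j''(w; z) := lim_{t↓0} (2/t²)(j(w + t z) − j(w) − t j'(w) z)` in `ℝ`
is equivalent to the existence of
`D²j(w; z) := lim_{t↓0} (j'(w + t z) − j'(w))/t` in `ℝ`;
moreover, in this case `j''(w; z) = D²j(w; z) · z`. -/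
theorem second_difference_quotient_iff_derivative_difference_quotient
    (j : ℝ → ℝ) (hj : ContDiff ℝ 1 j) (hlip : LocallyLipschitz (deriv j)) (w z : ℝ) :
    ((∃ L : ℝ,
        Tendsto (fun t : ℝ => (2 / t ^ 2) * (j (w + t * z) - j w - t * deriv j w * z))
          (𝓝[>] 0) (𝓝 L)) ↔
      (∃ D : ℝ,
        Tendsto (fun t : ℝ => (deriv j (w + t * z) - deriv j w) / t) (𝓝[>] 0) (𝓝 D)))
    ∧ ∀ L D : ℝ,
        Tendsto (fun t : ℝ => (2 / t ^ 2) * (j (w + t * z) - j w - t * deriv j w * z))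
          (𝓝[>] 0) (𝓝 L) →
        Tendsto (fun t : ℝ => (deriv j (w + t * z) - deriv j w) / t) (𝓝[>] 0) (𝓝 D) →
        L = D * z := by
  have hdiff := hj.differentiable one_ne_zero
  have hder : ∀ t : ℝ, HasDerivAt (fun t : ℝ => j (w + t * z) - j w - t * deriv j w * z)
      ((deriv j (w + t * z) - deriv j w) * z) t := by
    intro t
    have h1 : HasDerivAt (fun t : ℝ => w + t * z) z t := by
      simpa using ((hasDerivAt_id t).mul_const z).const_add w
    have h2 : HasDerivAt (fun t : ℝ => j (w + t * z)) (deriv j (w + t * z) * z) t :=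
      (hdiff (w + t * z)).hasDerivAt.comp t h1
    have h3 : HasDerivAt (fun t : ℝ => t * deriv j w * z) (deriv j w * z) t := by
      simpa [mul_assoc] using (hasDerivAt_id t).mul_const (deriv j w * z)
    have := (h2.sub_const (j w)).sub h3
    exact this.congr_deriv (by ring)
  have hc : Continuous (deriv j) := hj.continuous_deriv le_rfl
  have hcontH : Continuous fun t : ℝ => (deriv j (w + t * z) - deriv j w) * z :=
    ((hc.comp (continuous_const.add (continuous_id.mul continuous_const))).sub
      continuous_const).mul continuous_const
  have h0 : (fun t : ℝ => j (w + t * z) - j w - t * deriv j w * z) 0 = 0 := by simp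
  have back : ∀ D : ℝ,
      Tendsto (fun t : ℝ => (deriv j (w + t * z) - deriv j w) / t) (𝓝[>] 0) (𝓝 D) →
      Tendsto (fun t : ℝ => (2 / t ^ 2) * (j (w + t * z) - j w - t * deriv j w * z))
        (𝓝[>] 0) (𝓝 (D * z)) := by
    intro D hD
    have h1 : Tendsto (fun t : ℝ => ((deriv j (w + t * z) - deriv j w) * z) / t)
        (𝓝[>] 0) (𝓝 (D * z)) := by
      simpa [div_mul_eq_mul_div] using hD.mul_const z
    exact core_back _ _ hder hcontH h0 (D * z) h1
  refine ⟨⟨?_, ?_⟩, ?_⟩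
  · rintro ⟨L, hL⟩
    by_cases hz : z = 0
    · refine ⟨0, ?_⟩
      have he : (fun t : ℝ => (deriv j (w + t * z) - deriv j w) / t) = fun _ => (0:ℝ) := by
        funext t; simp [hz]
      rw [he]
      exact tendsto_const_nhds
    · obtain ⟨K, s, hs, hK⟩ := hlip w
      obtain ⟨δb, hδb, hball⟩ := Metric.mem_nhds_iff.mp hs
      set δ₀ : ℝ := δb / (|z| + 1) with hδ₀def
      have hδ₀ : 0 < δ₀ := by positivity
      have hmem : ∀ a ∈ Set.Ioo (0:ℝ) δ₀, w + a * z ∈ s := by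
        intro a ha
        apply hball
        rw [Metric.mem_ball, Real.dist_eq]
        have : |w + a * z - w| = a * |z| := by
          rw [add_sub_cancel_left, abs_mul, abs_of_pos ha.1]
        rw [this]
        have h5 : a * |z| ≤ a * (|z| + 1) := by nlinarith [ha.1]
        have h6 : a * (|z| + 1) < δ₀ * (|z| + 1) := by
          apply mul_lt_mul_of_pos_right ha.2 (by positivity)
        have h7 : δ₀ * (|z| + 1) = δb := by rw [hδ₀def]; field_simp
        linarith
      have hlipH : ∀ a ∈ Set.Ioo (0:ℝ) δ₀, ∀ b ∈ Set.Ioo (0:ℝ) δ₀,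
          |(deriv j (w + a * z) - deriv j w) * z - (deriv j (w + b * z) - deriv j w) * z|
            ≤ (K : ℝ) * z ^ 2 * |a - b| := by
        intro a ha b hb
        have hd := hK.dist_le_mul _ (hmem a ha) _ (hmem b hb)
        rw [Real.dist_eq, Real.dist_eq] at hd
        have h8 : |w + a * z - (w + b * z)| = |a - b| * |z| := by
          rw [← abs_mul]; ring_nf
        rw [h8] at hd
        have h9 : (deriv j (w + a * z) - deriv j w) * z - (deriv j (w + b * z) - deriv j w) * z
            = (deriv j (w + a * z) - deriv j (w + b * z)) * z := by ring
        rw [h9, abs_mul]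
        calc |deriv j (w + a * z) - deriv j (w + b * z)| * |z|
            ≤ (K : ℝ) * (|a - b| * |z|) * |z| :=
              mul_le_mul_of_nonneg_right hd (abs_nonneg z)
          _ = (K : ℝ) * z ^ 2 * |a - b| := by
              rw [← sq_abs z]; ring
      have key := core_fwd _ _ hder hcontH ((K : ℝ) * z ^ 2) δ₀
        (by positivity) hδ₀ hlipH L hL
      refine ⟨L / z, ?_⟩
      have heq : (fun t : ℝ => (((deriv j (w + t * z) - deriv j w) * z) / t) / z)
          = fun t : ℝ => (deriv j (w + t * z) - deriv j w) / t := by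
        funext t
        rcases eq_or_ne t 0 with rfl | ht
        · simp
        · field_simp
      have := key.div_const z
      rwa [heq] at this
  · rintro ⟨D, hD⟩
    exact ⟨D * z, back D hD⟩
  · intro L D hL hD
    exact tendsto_nhds_unique hL (back D hD)
end

section
/- Lower estimate via the preconjugate: Let Y be a Banach space, X := Y*, and let J : Y → (−∞,∞] be convex, proper and lower semicontinuous with G := J* : X → (−∞,∞] defined by G(x) := sup_{z ∈ Y} ( ⟨x, z⟩ − J(z) ). Let x ∈ dom G and w ∈ Y be such that G(y) ≥ G(x) + ⟨y − x, w⟩ for all y ∈ X, and suppose J is strongly-strongly twice epi-differentiable at w for x. Then for all h ∈ X: (1/2) G''(x, w; h) ≥ ((1/2) J''(w, x; ·))*(h), where ((1/2) J''(w, x; ·))*(h) := sup_{z ∈ Y} ( ⟨h, z⟩ − (1/2) J''(w, x; z) ). -/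
open Filter Topology

/-- The strong second subderivative `J''(w, x; z)` of `J : Y → (−∞,∞]` at `w` for
`x ∈ Y*`, in direction `z`: recovery sequences converge strongly in `Y`. -/
noncomputable def strongSecondSubderiv {Y : Type*} [NormedAddCommGroup Y] [NormedSpace ℝ Y]
    (J : Y → EReal) (w : Y) (x : Y →L[ℝ] ℝ) (z : Y) : EReal :=
  sInf { L : EReal | ∃ (t : ℕ → ℝ) (zk : ℕ → Y),
    (∀ k, 0 < t k) ∧ Tendsto t atTop (𝓝 0) ∧ Tendsto zk atTop (𝓝 z) ∧
    L = liminf (fun k => (((2 / (t k) ^ 2 : ℝ)) : EReal) *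
          (J (w + t k • zk k) - J w - (((t k * x (zk k) : ℝ)) : EReal))) atTop }

/-- `J` is strongly-strongly twice epi-differentiable at `w` for `x`. -/
def StronglyStronglyTwiceEpiDiff {Y : Type*} [NormedAddCommGroup Y] [NormedSpace ℝ Y]
    (J : Y → EReal) (w : Y) (x : Y →L[ℝ] ℝ) : Prop :=
  ∀ z : Y, ∀ t : ℕ → ℝ, (∀ k, 0 < t k) → Tendsto t atTop (𝓝 0) →
    ∃ zk : ℕ → Y, Tendsto zk atTop (𝓝 z) ∧
      Tendsto (fun k => (((2 / (t k) ^ 2 : ℝ)) : EReal) *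
          (J (w + t k • zk k) - J w - (((t k * x (zk k) : ℝ)) : EReal))) atTop
        (𝓝 (strongSecondSubderiv J w x z))

private lemma ereal_half_mul_le {a b : EReal} (h : a * ((2:ℝ):EReal) ≤ b) :
    a ≤ ((2:ℝ)⁻¹ : EReal) * b := by
  have h2 : (0:EReal) < ((2:ℝ):EReal) := EReal.coe_pos.2 two_pos
  have h2' : ((2:ℝ):EReal) ≠ ⊤ := EReal.coe_ne_top 2
  have hd := (EReal.le_div_iff_mul_le h2 h2').2 h
  rwa [EReal.div_eq_inv_mul] at hd

private lemma ereal_twice_half_sub (p : ℝ) (Q : EReal) :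
    (((p:ℝ):EReal) - ((2:ℝ)⁻¹ : EReal) * Q) * ((2:ℝ):EReal) ≤ ((2*p : ℝ):EReal) - Q := by
  have hco : ((2:ℝ)⁻¹ : EReal) = (((2⁻¹:ℝ)):EReal) := by rw [EReal.coe_inv]
  have h2 : (0:ℝ) < 2⁻¹ := by norm_num
  rw [hco]
  induction Q using EReal.rec with
  | bot =>
      rw [EReal.coe_mul_bot_of_pos h2, EReal.coe_sub_bot,
        EReal.top_mul_of_pos (EReal.coe_pos.2 two_pos), EReal.coe_sub_bot]
  | top =>
      rw [EReal.coe_mul_top_of_pos h2, EReal.sub_top,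
        EReal.bot_mul_of_pos (EReal.coe_pos.2 two_pos)]
      exact bot_le
  | coe q =>
      rw [← EReal.coe_mul, ← EReal.coe_sub, ← EReal.coe_mul, ← EReal.coe_sub,
        EReal.coe_le_coe_iff]
      ring_nf
      exact le_refl _

private lemma fenchel_eq_at_subgradient {Y : Type*} [NormedAddCommGroup Y] [NormedSpace ℝ Y]
    (J : Y → EReal)
    (hJconv : ∀ z₁ z₂ : Y, ∀ θ : ℝ, 0 ≤ θ → θ ≤ 1 →
      J (θ • z₁ + (1 - θ) • z₂) ≤ ((θ : ℝ) : EReal) * J z₁ + (((1 - θ : ℝ)) : EReal) * J z₂)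
    (hJproper : ∃ z : Y, J z ≠ ⊤) (hJbot : ∀ z : Y, J z ≠ ⊥)
    (hJlsc : LowerSemicontinuous J)
    (G : (Y →L[ℝ] ℝ) → EReal)
    (hG : ∀ x : Y →L[ℝ] ℝ, G x = ⨆ z : Y, (((x z : ℝ)) : EReal) - J z)
    (x : Y →L[ℝ] ℝ) (gx : ℝ) (hgx : G x = (gx : EReal))
    (w : Y)
    (hsub : ∀ y : Y →L[ℝ] ℝ, G x + ((((y - x) w : ℝ)) : EReal) ≤ G y) :
    J w = ((x w - gx : ℝ) : EReal) := by
  obtain ⟨z₀, hz₀⟩ := hJproper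
  have h1 : ((x w : ℝ) : EReal) - J w ≤ G x := by
    rw [hG]; exact le_iSup (fun z => ((x z : ℝ) : EReal) - J z) w
  have h2 : J w ≤ ((x w - gx : ℝ) : EReal) := by
    by_contra hlt
    push_neg at hlt
    set r : ℝ := x w - gx with hr
    set E : Set (Y × ℝ) := {p : Y × ℝ | J p.1 ≤ ((p.2 : ℝ) : EReal)} with hE
    have hEclosed : IsClosed E := by
      have : E = (fun p : Y × ℝ => (p.1, (p.2 : EReal))) ⁻¹' {q : Y × EReal | J q.1 ≤ q.2} := rfl
      rw [this]
      exact hJlsc.isClosed_epigraph.preimage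
        (continuous_fst.prodMk (continuous_coe_real_ereal.comp continuous_snd))
    have hEconv : Convex ℝ E := by
      rintro ⟨z₁, a₁⟩ h₁ ⟨z₂, a₂⟩ h₂ θ μ hθ hμ hθμ
      simp only [hE, Set.mem_setOf_eq] at h₁ h₂ ⊢
      have hμ' : μ = 1 - θ := by linarith
      subst hμ'
      have hcb := hJconv z₁ z₂ θ hθ (by linarith)
      have hfst : (θ • (z₁, a₁) + (1 - θ) • (z₂, a₂) : Y × ℝ).1 = θ • z₁ + (1 - θ) • z₂ := rfl
      have hsnd : (θ • (z₁, a₁) + (1 - θ) • (z₂, a₂) : Y × ℝ).2 = θ * a₁ + (1 - θ) * a₂ := rfl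
      rw [hfst, hsnd]
      refine le_trans hcb ?_
      have m1 : ((θ : ℝ) : EReal) * J z₁ ≤ ((θ : ℝ) : EReal) * ((a₁ : ℝ) : EReal) :=
        mul_le_mul_of_nonneg_left h₁ (by exact_mod_cast hθ)
      have m2 : (((1 - θ : ℝ)) : EReal) * J z₂ ≤ (((1 - θ : ℝ)) : EReal) * ((a₂ : ℝ) : EReal) :=
        mul_le_mul_of_nonneg_left h₂ (by exact_mod_cast (by linarith : (0:ℝ) ≤ 1 - θ))
      calc ((θ : ℝ) : EReal) * J z₁ + (((1 - θ : ℝ)) : EReal) * J z₂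
          ≤ ((θ : ℝ) : EReal) * ((a₁ : ℝ) : EReal) + (((1 - θ : ℝ)) : EReal) * ((a₂ : ℝ) : EReal) :=
            add_le_add m1 m2
        _ = ((θ * a₁ + (1 - θ) * a₂ : ℝ) : EReal) := by
            rw [← EReal.coe_mul, ← EReal.coe_mul, ← EReal.coe_add]
    have hwE : (w, r) ∉ E := by
      simp only [hE, Set.mem_setOf_eq]
      exact not_le.2 hlt
    obtain ⟨f, u, hfE, hfwr⟩ := geometric_hahn_banach_closed_point hEconv hEclosed hwE
    set x₀ : Y →L[ℝ] ℝ := f.comp (ContinuousLinearMap.inl ℝ Y ℝ) with hx₀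
    set s : ℝ := f (0, 1) with hsdef
    have hdecomp : ∀ p : Y × ℝ, f p = x₀ p.1 + p.2 * s := by
      intro p
      have hp : (p : Y × ℝ) = ((p.1, 0) : Y × ℝ) + p.2 • ((0 : Y), (1 : ℝ)) := by
        ext <;> simp
      calc f p = f (((p.1, 0) : Y × ℝ) + p.2 • ((0 : Y), (1 : ℝ))) := by rw [← hp]
        _ = f (p.1, 0) + p.2 * f (0, 1) := by rw [map_add, map_smul, smul_eq_mul]
        _ = x₀ p.1 + p.2 * s := rfl
    obtain ⟨a₀, ha₀⟩ : ∃ a : ℝ, J z₀ = (a : EReal) :=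
      ⟨(J z₀).toReal, (EReal.coe_toReal hz₀ (hJbot z₀)).symm⟩
    have hs_le : s ≤ 0 := by
      by_contra hpos
      push_neg at hpos
      have hmE : (z₀, max a₀ ((u - x₀ z₀) / s) + 1) ∈ E := by
        simp only [hE, Set.mem_setOf_eq, ha₀]
        exact_mod_cast le_trans (le_max_left a₀ ((u - x₀ z₀) / s)) (by linarith)
      have hlt1 : x₀ z₀ + (max a₀ ((u - x₀ z₀) / s) + 1) * s < u := by
        have := hfE _ hmE; rw [hdecomp] at this; exact this
      have hm2 : (u - x₀ z₀) / s < max a₀ ((u - x₀ z₀) / s) + 1 :=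
        lt_of_le_of_lt (le_max_right _ _) (lt_add_one _)
      have := (div_lt_iff₀ hpos).1 hm2
      linarith
    rcases lt_or_eq_of_le hs_le with hsneg | hs0
    · -- s < 0
      have hσ : 0 < -s := by linarith
      have hσne : -s ≠ 0 := ne_of_gt hσ
      have hsne : s ≠ 0 := ne_of_lt hsneg
      set x' : Y →L[ℝ] ℝ := (-s)⁻¹ • x₀ with hx'
      have hx'app : ∀ v : Y, x' v = (-s)⁻¹ * x₀ v := fun v => rfl
      have hGx' : G x' ≤ ((u / (-s) : ℝ) : EReal) := by
        rw [hG]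
        refine iSup_le fun v => ?_
        rcases eq_or_ne (J v) ⊤ with hv | hv
        · rw [hv, EReal.sub_top]; exact bot_le
        · obtain ⟨a, ha⟩ : ∃ a : ℝ, J v = (a : EReal) :=
            ⟨(J v).toReal, (EReal.coe_toReal hv (hJbot v)).symm⟩
          have hvE : (v, a) ∈ E := by simp [hE, ha]
          have h2' : x₀ v + a * s < u := by
            have := hfE _ hvE; rw [hdecomp] at this; exact this
          rw [ha, ← EReal.coe_sub, EReal.coe_le_coe_iff, hx'app]
          rw [le_div_iff₀ hσ]
          have hexp : ((-s)⁻¹ * x₀ v - a) * (-s) = x₀ v + a * s := by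
            field_simp
            ring
          rw [hexp]
          linarith
      have h4 := hsub x'
      rw [hgx] at h4
      have h5 : gx + (x' - x) w ≤ u / (-s) := by
        have := le_trans h4 hGx'
        rw [← EReal.coe_add, EReal.coe_le_coe_iff] at this
        exact this
      have h6 : (x' - x) w = (-s)⁻¹ * x₀ w - x w := by
        rw [ContinuousLinearMap.sub_apply, hx'app]
      rw [h6] at h5
      have h7 : u < x₀ w + r * s := by
        have := hfwr; rw [hdecomp (w, r)] at this; exact this
      have h10 : (gx + ((-s)⁻¹ * x₀ w - x w)) * (-s) ≤ u := by
        rw [← le_div_iff₀ hσ]; exact h5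
      have hexp2 : (gx + ((-s)⁻¹ * x₀ w - x w)) * (-s) = -s * gx + x₀ w + s * x w := by
        field_simp
        ring
      rw [hexp2] at h10
      rw [hr] at h7
      nlinarith
    · -- s = 0
      have hx₀w : u < x₀ w := by
        have := hfwr
        rw [hdecomp (w, r), hs0, mul_zero, add_zero] at this
        exact this
      have hGy : G (x + x₀) ≤ ((gx + u : ℝ) : EReal) := by
        rw [hG]
        refine iSup_le fun v => ?_
        rcases eq_or_ne (J v) ⊤ with hv | hv
        · rw [hv, EReal.sub_top]; exact bot_le
        · obtain ⟨a, ha⟩ : ∃ a : ℝ, J v = (a : EReal) :=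
            ⟨(J v).toReal, (EReal.coe_toReal hv (hJbot v)).symm⟩
          have h1' : ((x v : ℝ) : EReal) - J v ≤ G x := by
            rw [hG]; exact le_iSup (fun z => ((x z : ℝ) : EReal) - J z) v
          rw [ha, hgx, ← EReal.coe_sub, EReal.coe_le_coe_iff] at h1'
          have hvE : (v, a) ∈ E := by simp [hE, ha]
          have h2' : x₀ v + a * s < u := by
            have := hfE _ hvE; rw [hdecomp] at this; exact this
          rw [hs0, mul_zero, add_zero] at h2'
          rw [ha, ← EReal.coe_sub, EReal.coe_le_coe_iff]
          have hadd : (x + x₀) v = x v + x₀ v := rfl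
          rw [hadd]
          linarith
      have h4 := hsub (x + x₀)
      rw [add_sub_cancel_left, hgx] at h4
      have h5 : gx + x₀ w ≤ gx + u := by
        have := le_trans h4 hGy
        rw [← EReal.coe_add, EReal.coe_le_coe_iff] at this
        exact this
      linarith
  have hwtop : J w ≠ ⊤ := by
    intro htop
    rw [htop] at h2
    exact (EReal.coe_ne_top _) (top_le_iff.1 h2)
  obtain ⟨a, ha⟩ : ∃ a : ℝ, J w = (a : EReal) :=
    ⟨(J w).toReal, (EReal.coe_toReal hwtop (hJbot w)).symm⟩
  rw [ha] at h1 h2 ⊢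
  rw [hgx, ← EReal.coe_sub, EReal.coe_le_coe_iff] at h1
  rw [EReal.coe_le_coe_iff] at h2
  exact congrArg _ (by linarith)


/-- Lemma 4.2, `lem:lower_bound`, lower estimate via the preconjugate.
Let `Y` be a Banach space, `X = Y*`, `J : Y → (−∞,∞]` convex, proper and lower
semicontinuous, `G := J*` on `X`.  If `x ∈ dom G`, `w ∈ Y` satisfies
`G(y) ≥ G(x) + ⟨y − x, w⟩` for all `y ∈ X`, and `J` is strongly-strongly twice
epi-differentiable at `w` for `x`, then
`(1/2)G''(x, w; h) ≥ ((1/2)J''(w, x; ·))*(h)` for all `h ∈ X`. -/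
theorem lower_estimate_second_subderivative_via_preconjugate
    {Y : Type*} [NormedAddCommGroup Y] [NormedSpace ℝ Y] [CompleteSpace Y]
    (J : Y → EReal)
    (hJconv : ∀ z₁ z₂ : Y, ∀ θ : ℝ, 0 ≤ θ → θ ≤ 1 →
      J (θ • z₁ + (1 - θ) • z₂) ≤ ((θ : ℝ) : EReal) * J z₁ + (((1 - θ : ℝ)) : EReal) * J z₂)
    (hJproper : ∃ z : Y, J z ≠ ⊤) (hJbot : ∀ z : Y, J z ≠ ⊥)
    (hJlsc : LowerSemicontinuous J)
    (G : (Y →L[ℝ] ℝ) → EReal)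
    (hG : ∀ x : Y →L[ℝ] ℝ, G x = ⨆ z : Y, (((x z : ℝ)) : EReal) - J z)
    (x : Y →L[ℝ] ℝ) (hxdom : G x ≠ ⊤)
    (w : Y)
    (hsub : ∀ y : Y →L[ℝ] ℝ, G x + ((((y - x) w : ℝ)) : EReal) ≤ G y)
    (hepi : StronglyStronglyTwiceEpiDiff J w x) :
    ∀ h : Y →L[ℝ] ℝ,
      (⨆ z : Y, (((h z : ℝ)) : EReal)
          - ((2 : ℝ)⁻¹ : EReal) * strongSecondSubderiv J w x z)
        ≤ ((2 : ℝ)⁻¹ : EReal) * weakStarSecondSubderiv G x w h := by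
  intro h
  -- G x is a (finite) real number
  have hGxbot : G x ≠ ⊥ := by
    obtain ⟨z₀, hz₀⟩ := hJproper
    obtain ⟨a, ha⟩ : ∃ a : ℝ, J z₀ = (a : EReal) :=
      ⟨(J z₀).toReal, (EReal.coe_toReal hz₀ (hJbot z₀)).symm⟩
    have h1 : ((x z₀ : ℝ) : EReal) - J z₀ ≤ G x := by
      rw [hG]; exact le_iSup (fun z => ((x z : ℝ) : EReal) - J z) z₀
    intro hbot
    rw [hbot, ha, ← EReal.coe_sub, le_bot_iff] at h1
    exact EReal.coe_ne_bot _ h1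
  set gx : ℝ := (G x).toReal with hgxdef
  have hgx : G x = (gx : EReal) := (EReal.coe_toReal hxdom hGxbot).symm
  have hfen : J w = ((x w - gx : ℝ) : EReal) :=
    fenchel_eq_at_subgradient J hJconv hJproper hJbot hJlsc G hG x gx hgx w hsub
  refine iSup_le fun z => ?_
  apply ereal_half_mul_le
  show _ ≤ sInf _
  refine le_sInf fun L hL => ?_
  simp only [Set.mem_setOf_eq] at hL
  obtain ⟨t, hs, htpos, ht0, hws, hLdef⟩ := hL
  obtain ⟨zk, hzk, hP⟩ := hepi z t htpos ht0
  set P : ℕ → EReal := fun k => (((2 / (t k) ^ 2 : ℝ)) : EReal) *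
      (J (w + t k • zk k) - J w - (((t k * x (zk k) : ℝ)) : EReal)) with hPdef
  set A : ℕ → EReal := fun k => (((2 / (t k) ^ 2 : ℝ)) : EReal) *
      (G (x + t k • hs k) - G x - (((t k * hs k w : ℝ)) : EReal)) with hAdef
  set Q : EReal := strongSecondSubderiv J w x z with hQdef
  -- Banach–Steinhaus : the family `hs` is uniformly bounded
  have hbdd : ∀ y : Y, ∃ C, ∀ k, ‖hs k y‖ ≤ C := by
    intro y
    obtain ⟨C, hC⟩ := ((hws y).norm).bddAbove_range
    exact ⟨C, fun k => hC (Set.mem_range_self k)⟩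
  obtain ⟨C, hC⟩ := banach_steinhaus hbdd
  -- hs k (zk k) → h z
  have hzz : Tendsto (fun k => hs k (zk k) - hs k z) atTop (𝓝 0) := by
    apply squeeze_zero_norm (a := fun k => C * ‖zk k - z‖)
    · intro k
      have e : hs k (zk k) - hs k z = hs k (zk k - z) := (map_sub (hs k) _ _).symm
      rw [e]
      calc ‖hs k (zk k - z)‖ ≤ ‖hs k‖ * ‖zk k - z‖ := (hs k).le_opNorm _
        _ ≤ C * ‖zk k - z‖ := mul_le_mul_of_nonneg_right (hC k) (norm_nonneg _)
    · have h0 : Tendsto (fun k => zk k - z) atTop (𝓝 0) := tendsto_sub_nhds_zero_iff.2 hzk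
      have h1 := h0.norm
      rw [norm_zero] at h1
      have := h1.const_mul C
      rwa [mul_zero] at this
  have hsz : Tendsto (fun k => hs k (zk k)) atTop (𝓝 (h z)) := by
    have := hzz.add (hws z)
    rw [zero_add] at this
    refine this.congr fun k => ?_
    ring
  -- pointwise key inequality
  have key : ∀ k, ((2 * hs k (zk k) : ℝ) : EReal) - P k ≤ A k := by
    intro k
    have hτ : 0 < t k := htpos k
    have hcpos : (0:ℝ) < 2 / (t k) ^ 2 := by positivity
    rcases eq_or_ne (J (w + t k • zk k)) ⊤ with hJt | hJt
    · have hPk : P k = ⊤ := by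
        simp only [hPdef]
        rw [hJt, hfen, EReal.top_sub_coe, EReal.top_sub_coe, EReal.coe_mul_top_of_pos hcpos]
      rw [hPk, EReal.sub_top]
      exact bot_le
    · obtain ⟨b, hb⟩ : ∃ b : ℝ, J (w + t k • zk k) = (b : EReal) :=
        ⟨_, (EReal.coe_toReal hJt (hJbot _)).symm⟩
      have hGnb : G (x + t k • hs k) ≠ ⊥ := by
        intro hbot
        have hb2 := hsub (x + t k • hs k)
        rw [hbot, hgx, ← EReal.coe_add, le_bot_iff] at hb2
        exact EReal.coe_ne_bot _ hb2
      rcases eq_or_ne (G (x + t k • hs k)) ⊤ with hGt | hGt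
      · have hAk : A k = ⊤ := by
          simp only [hAdef]
          rw [hGt, hgx, EReal.top_sub_coe, EReal.top_sub_coe, EReal.coe_mul_top_of_pos hcpos]
        rw [hAk]
        exact le_top
      · obtain ⟨g', hg'⟩ : ∃ g' : ℝ, G (x + t k • hs k) = (g' : EReal) :=
          ⟨_, (EReal.coe_toReal hGt hGnb).symm⟩
        have hGlow : (((x + t k • hs k) (w + t k • zk k) : ℝ) : EReal)
            - J (w + t k • zk k) ≤ G (x + t k • hs k) := by
          rw [hG]; exact le_iSup (fun v => (((x + t k • hs k) v : ℝ) : EReal) - J v) (w + t k • zk k)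
        have happ : (x + t k • hs k) (w + t k • zk k)
            = x w + t k * x (zk k) + t k * hs k w + t k * (t k * hs k (zk k)) := by
          simp [ContinuousLinearMap.add_apply, ContinuousLinearMap.smul_apply,
            map_add, map_smul, smul_eq_mul]
          ring
        rw [hb, hg', happ, ← EReal.coe_sub, EReal.coe_le_coe_iff] at hGlow
        simp only [hPdef, hAdef]
        rw [hb, hg', hgx, hfen]
        norm_cast
        have ht2 : (t k) ≠ 0 := ne_of_gt hτ
        have e1 : 2 * hs k (zk k) - 2 / (t k) ^ 2 * (b - (x w - gx) - t k * x (zk k))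
            = 2 / (t k) ^ 2 * ((x w + t k * x (zk k) + t k * hs k w
                + t k * (t k * hs k (zk k)) - b) - gx - t k * hs k w) := by
          field_simp
          ring
        rw [e1]
        have e2 := sub_le_sub_right (sub_le_sub_right hGlow gx) (t k * hs k w)
        exact mul_le_mul_of_nonneg_left e2 hcpos.le
  -- pass to the limit
  have htendP : Tendsto (fun k => ((2 * hs k (zk k) : ℝ) : EReal) - P k) atTop
      (𝓝 (((2 * h z : ℝ) : EReal) - Q)) := by
    have ha : Tendsto (fun k => ((2 * hs k (zk k) : ℝ) : EReal)) atTop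
        (𝓝 ((2 * h z : ℝ) : EReal)) :=
      (continuous_coe_real_ereal.tendsto _).comp (hsz.const_mul 2)
    have hb : Tendsto (fun k => -P k) atTop (𝓝 (-Q)) := hP.neg
    have hc : ContinuousAt (fun p : EReal × EReal => p.1 + p.2) (((2 * h z : ℝ) : EReal), -Q) :=
      EReal.continuousAt_add (Or.inl (EReal.coe_ne_top _)) (Or.inl (EReal.coe_ne_bot _))
    have := hc.tendsto.comp (ha.prodMk_nhds hb)
    simpa [sub_eq_add_neg, Function.comp_def] using this
  have hQL : ((2 * h z : ℝ) : EReal) - Q ≤ L := by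
    rw [hLdef, ← htendP.liminf_eq]
    exact liminf_le_liminf (Eventually.of_forall key)
  exact le_trans (ereal_twice_half_sub (h z) Q) hQL
end
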